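/- Let R > e and A₁(t) = log(R/t). Then for any h ∈ C¹_c((0,1]): ∫₀¹ |h'(t)|² t dt ≥ (1/4) ∫₀¹ |h(t)|² A₁(t)^{-2} dt/t − (1/2) A₁(1)^{-1} h(1)². -/

import Mathlib

open MeasureTheory Real Set

/-- One dimensional logarithmic Hardy inequality with boundary term. -/
theorem log_hardy_one (R : ℝ) (hR : Real.exp 1 < R)
    (h : ℝ → ℝ) (hh : ContDiff ℝ 1 h) (h0 : ∃ a > (0:ℝ), ∀ t < a, h t = 0) :
    ∫ t in Ioc (0:ℝ) 1, |deriv h t| ^ 2 * t ≥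
      (1/4) * (∫ t in Ioc (0:ℝ) 1, (h t) ^ 2 / ((Real.log (R / t)) ^ 2 * t))
        - (1/2) * (Real.log R)⁻¹ * (h 1) ^ 2 := by
  obtain ⟨a, ha, hA0⟩ := h0
  have hR0 : (0:ℝ) < R := lt_trans (Real.exp_pos 1) hR
  have hlogR : (1:ℝ) < Real.log R := by
    have := Real.log_lt_log (Real.exp_pos 1) hR
    simpa using this
  have hcont : Continuous h := hh.continuous
  have hcont' : Continuous (deriv h) := hh.continuous_deriv le_rfl
  have hdiff : Differentiable ℝ h := hh.differentiable one_ne_zero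
  have hder0 : ∀ t < a, deriv h t = 0 := by
    intro t ht
    have he : h =ᶠ[nhds t] (fun _ => (0:ℝ)) := by
      filter_upwards [Iio_mem_nhds ht] with s hs using hA0 s hs
    rw [he.deriv_eq]; simp
  have hApos : ∀ t ∈ Ioc (0:ℝ) 1, 0 < Real.log (R / t) := by
    intro t ht
    have h1 : R ≤ R / t := by
      rw [le_div_iff₀ ht.1]; nlinarith [ht.2, hR0]
    calc (0:ℝ) < Real.log R := by linarith
      _ ≤ Real.log (R / t) := Real.log_le_log hR0 h1
  set F : ℝ → ℝ := fun t => (1/2) * (h t)^2 / Real.log (R / t) with hFdef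
  set G : ℝ → ℝ := fun t =>
    h t * deriv h t / Real.log (R / t)
      + (1/2) * (h t)^2 / (t * (Real.log (R / t))^2) with hGdef
  have hG0 : ∀ t < a, G t = 0 := by
    intro t ht
    simp [hGdef, hA0 t ht, hder0 t ht]
  have hAcont : ∀ x : ℝ, 0 < x → ContinuousAt (fun t => Real.log (R / t)) x := by
    intro x hx
    have h1 : ContinuousAt (fun t : ℝ => R / t) x :=
      continuousAt_const.div continuousAt_id (ne_of_gt hx)
    exact (Real.continuousAt_log (ne_of_gt (div_pos hR0 hx))).comp h1
  have hAder : ∀ x : ℝ, 0 < x → HasDerivAt (fun t => Real.log (R / t)) (-x⁻¹) x := by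
    intro x hx
    have h1 : HasDerivAt (fun s : ℝ => Real.log R - Real.log s) (-x⁻¹) x := by
      simpa using (Real.hasDerivAt_log (ne_of_gt hx)).const_sub (Real.log R)
    refine HasDerivAt.congr_of_eventuallyEq h1 ?_
    filter_upwards [Ioi_mem_nhds hx] with s hs
    rw [Real.log_div (ne_of_gt hR0) (ne_of_gt hs)]
  have hFder : ∀ t ∈ Icc (0:ℝ) 1, HasDerivAt F (G t) t := by
    intro t ht
    rcases lt_or_ge t a with hta | hta
    · rw [hG0 t hta]
      refine (hasDerivAt_const t (0:ℝ)).congr_of_eventuallyEq ?_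
      filter_upwards [Iio_mem_nhds hta] with s hs
      simp [hFdef, hA0 s hs]
    · have htpos : 0 < t := lt_of_lt_of_le ha hta
      have htI : t ∈ Ioc (0:ℝ) 1 := ⟨htpos, ht.2⟩
      have hAt : Real.log (R / t) ≠ 0 := ne_of_gt (hApos t htI)
      have hnum : HasDerivAt (fun s => (1/2) * (h s)^2) (h t * deriv h t) t := by
        have := ((hdiff t).hasDerivAt.pow 2).const_mul (1/2 : ℝ)
        exact this.congr_deriv (by ring)
      have hd := hnum.div (hAder t htpos) hAt
      refine hd.congr_deriv ?_
      rw [hGdef]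
      field_simp
      ring
  have hGcont : ContinuousOn G (Icc (0:ℝ) 1) := by
    intro x hx
    rcases lt_or_ge x a with hxa | hxa
    · have hev : G =ᶠ[nhds x] (fun _ => (0:ℝ)) := by
        filter_upwards [Iio_mem_nhds hxa] with s hs using hG0 s hs
      exact hev.continuousAt.continuousWithinAt
    · have hxpos : 0 < x := lt_of_lt_of_le ha hxa
      have hAx := hApos x ⟨hxpos, hx.2⟩
      have c1 : ContinuousAt (fun t => Real.log (R / t)) x := hAcont x hxpos
      have : ContinuousAt G x := by
        rw [hGdef]
        apply ContinuousAt.add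
        · exact (hcont.continuousAt.mul hcont'.continuousAt).div c1 (ne_of_gt hAx)
        · exact (continuousAt_const.mul ((hcont.pow 2).continuousAt)).div
            (continuousAt_id.mul (c1.pow 2))
            (ne_of_gt (mul_pos hxpos (pow_pos hAx 2)))
      exact this.continuousWithinAt
  have hQcont : ContinuousOn (fun t => (h t)^2 / ((Real.log (R/t))^2 * t)) (Icc (0:ℝ) 1) := by
    intro x hx
    rcases lt_or_ge x a with hxa | hxa
    · have hev : (fun t => (h t)^2 / ((Real.log (R/t))^2 * t)) =ᶠ[nhds x] (fun _ => (0:ℝ)) := by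
        filter_upwards [Iio_mem_nhds hxa] with s hs
        simp [hA0 s hs]
      exact hev.continuousAt.continuousWithinAt
    · have hxpos : 0 < x := lt_of_lt_of_le ha hxa
      have hAx := hApos x ⟨hxpos, hx.2⟩
      exact (((hcont.pow 2).continuousAt).div
        (((hAcont x hxpos).pow 2).mul continuousAt_id)
        (ne_of_gt (mul_pos (pow_pos hAx 2) hxpos))).continuousWithinAt
  have hPint : IntegrableOn (fun t => (deriv h t)^2 * t) (Ioc (0:ℝ) 1) :=
    ((hcont'.pow 2).mul continuous_id).integrableOn_Ioc
  have hQint : IntegrableOn (fun t => (h t)^2 / ((Real.log (R/t))^2 * t)) (Ioc (0:ℝ) 1) :=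
    (hQcont.integrableOn_Icc).mono_set Ioc_subset_Icc_self
  have hGint : IntegrableOn G (Ioc (0:ℝ) 1) :=
    (hGcont.integrableOn_Icc).mono_set Ioc_subset_Icc_self
  have hGeq : ∫ t in Ioc (0:ℝ) 1, G t = (1/2) * (Real.log R)⁻¹ * (h 1)^2 := by
    have hFTC := intervalIntegral.integral_eq_sub_of_hasDerivAt
      (f := F) (f' := G) (a := 0) (b := 1)
      (fun t ht => hFder t (by rwa [uIcc_of_le (by norm_num : (0:ℝ) ≤ 1)] at ht))
      ((by rw [uIcc_of_le (by norm_num : (0:ℝ) ≤ 1)]; exact hGcont :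
        ContinuousOn G (uIcc (0:ℝ) 1)).intervalIntegrable)
    rw [intervalIntegral.integral_of_le (by norm_num : (0:ℝ) ≤ 1)] at hFTC
    rw [hFTC]
    have hF0 : F 0 = 0 := by simp [hFdef, hA0 0 ha]
    have hF1 : F 1 = (1/2) * (h 1)^2 / Real.log R := by simp [hFdef]
    rw [hF1, hF0]
    ring
  have hkey : 0 ≤ ∫ t in Ioc (0:ℝ) 1,
      ((deriv h t)^2 * t - (1/4) * ((h t)^2 / ((Real.log (R/t))^2 * t)) + G t) := by
    refine setIntegral_nonneg measurableSet_Ioc ?_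
    intro t ht
    have htpos := ht.1
    have hAt := hApos t ht
    have heq : (deriv h t)^2 * t - (1/4) * ((h t)^2 / ((Real.log (R/t))^2 * t)) + G t
        = (2 * deriv h t * t * Real.log (R/t) + h t)^2
            / (4 * t * (Real.log (R/t))^2) := by
      rw [hGdef]
      field_simp
      ring
    rw [heq]
    exact div_nonneg (sq_nonneg _)
      (mul_pos (mul_pos (by norm_num : (0:ℝ) < 4) htpos) (pow_pos hAt 2)).le
  have hsplit : (∫ t in Ioc (0:ℝ) 1,
      ((deriv h t)^2 * t - (1/4) * ((h t)^2 / ((Real.log (R/t))^2 * t)) + G t))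
      = (∫ t in Ioc (0:ℝ) 1, (deriv h t)^2 * t)
        - (1/4) * (∫ t in Ioc (0:ℝ) 1, (h t)^2 / ((Real.log (R/t))^2 * t))
        + ∫ t in Ioc (0:ℝ) 1, G t := by
    have hfg : Integrable
        (fun t => (deriv h t)^2 * t - (1/4) * ((h t)^2 / ((Real.log (R/t))^2 * t)))
        (volume.restrict (Ioc (0:ℝ) 1)) := hPint.sub (hQint.const_mul (1/4))
    have hcq : Integrable (fun t => (1/4) * ((h t)^2 / ((Real.log (R/t))^2 * t)))
        (volume.restrict (Ioc (0:ℝ) 1)) := hQint.const_mul (1/4)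
    rw [integral_add hfg hGint, integral_sub hPint hcq, MeasureTheory.integral_const_mul]
  simp_rw [sq_abs]
  rw [hsplit, hGeq] at hkey
  linarith
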